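/- If M < 2N - 1, then no matrix A ∈ ℝ^{M×N} satisfies the complement property. -/

import Mathlib

open Finset

/-- The complement property. -/
def ComplementProperty {M N : ℕ} (A : Matrix (Fin M) (Fin N) ℝ) : Prop :=
  ∀ S : Finset (Fin M),
    Submodule.span ℝ (A '' (S : Set (Fin M))) = ⊤ ∨
    Submodule.span ℝ (A '' ((Sᶜ : Finset (Fin M)) : Set (Fin M))) = ⊤

lemma span_small_ne_top {M N : ℕ} (A : Matrix (Fin M) (Fin N) ℝ) (T : Finset (Fin M))
    (hT : T.card < N) : Submodule.span ℝ (A '' (T : Set (Fin M))) ≠ ⊤ := by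
  classical
  haveI : Fintype (A '' (T : Set (Fin M))) := Set.fintypeImage _ _
  have hcard : (A '' (T : Set (Fin M))).toFinset.card < N := by
    calc (A '' (T : Set (Fin M))).toFinset.card = (T.image A).card := by
          congr 1; ext x; exact Set.mem_toFinset.trans (Set.ext_iff.mp (Finset.coe_image (s := T) (f := A)) x).symm
      _ ≤ T.card := Finset.card_image_le
      _ < N := hT
  have := span_lt_top_of_card_lt_finrank (R := ℝ) (s := A '' (T : Set (Fin M)))
    (by simpa using hcard)
  exact this.ne

theorem no_complement_property_of_few_measurements
    {M N : ℕ} (hN : 1 ≤ N) (hM : M < 2 * N - 1)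
    (A : Matrix (Fin M) (Fin N) ℝ) :
    ¬ ComplementProperty A := by
  classical
  intro h
  set k : ℕ := min (N - 1) M with hk
  have hkM : k ≤ M := min_le_right _ _
  set S : Finset (Fin M) :=
    (Finset.univ : Finset (Fin k)).map ⟨Fin.castLE hkM, Fin.castLE_injective hkM⟩ with hS
  have hScard : S.card = k := by simp [hS]
  have hSccard : Sᶜ.card = M - k := by
    rw [Finset.card_compl, Fintype.card_fin, hScard]
  rcases h S with h1 | h1
  · exact span_small_ne_top A S (by omega) h1
  · exact span_small_ne_top A Sᶜ (by omega) h1
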